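/- If r is not a prime power (r ≥ 2), then the greatest common divisor of the binomial coefficients C(r,1), C(r,2), ..., C(r,r-1) is 1. -/
import Mathlib

lemma aux_lucas (p : ℕ) (hp : p.Prime) : ∀ (a m : ℕ), ¬ p ∣ m →
    ¬ p ∣ Nat.choose (p ^ a * m) (p ^ a) := by
  haveI : Fact p.Prime := ⟨hp⟩
  intro a
  induction a with
  | zero => intro m hm; simpa [Nat.choose_one_right] using hm
  | succ a ih =>
    intro m hm hcontra
    have key : Nat.choose (p ^ (a+1) * m) (p ^ (a+1)) ≡
        Nat.choose ((p ^ (a+1) * m) % p) ((p ^ (a+1)) % p) *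
        Nat.choose ((p ^ (a+1) * m) / p) ((p ^ (a+1)) / p) [MOD p] :=
      Choose.choose_modEq_choose_mod_mul_choose_div_nat
    have hp0 : 0 < p := hp.pos
    have e1 : p ^ (a+1) * m = p * (p ^ a * m) := by ring
    have e2 : p ^ (a+1) = p * p ^ a := by ring
    rw [e1, e2, Nat.mul_mod_right, Nat.mul_mod_right,
      Nat.mul_div_cancel_left _ hp0, Nat.mul_div_cancel_left _ hp0] at key
    simp only [Nat.choose_self, one_mul] at key
    rw [e1, e2] at hcontra
    have : p ∣ Nat.choose (p ^ a * m) (p ^ a) :=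
      (Nat.modEq_zero_iff_dvd.mp (key.symm.trans (Nat.modEq_zero_iff_dvd.mpr hcontra)))
    exact ih m hm this

theorem stmt_0 (r : ℕ) (hr : 2 ≤ r) (h : ¬ IsPrimePow r) :
    Finset.gcd (Finset.Icc 1 (r - 1)) (fun k => r.choose k) = 1 := by
  by_contra hne
  obtain ⟨p, hp, hpd⟩ := Nat.exists_prime_and_dvd hne
  have h1mem : (1 : ℕ) ∈ Finset.Icc 1 (r - 1) := by
    simp only [Finset.mem_Icc]; omega
  have hdr : Finset.gcd (Finset.Icc 1 (r - 1)) (fun k => r.choose k) ∣ r := by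
    simpa using Finset.gcd_dvd (f := fun k => r.choose k) h1mem
  have hpr : p ∣ r := hpd.trans hdr
  set a := r.factorization p with ha_def
  have ha : 0 < a := hp.factorization_pos_of_dvd (by omega) hpr
  have heq : p ^ a * (r / p ^ a) = r := Nat.ordProj_mul_ordCompl_eq_self r p
  set m := r / p ^ a with hm_def
  have hpm : ¬ p ∣ m := Nat.not_dvd_ordCompl hp (by omega)
  have hpa1 : 1 ≤ p ^ a := Nat.one_le_pow _ _ hp.pos
  have hm2 : 2 ≤ m := by
    rcases Nat.lt_or_ge m 2 with hlt | hge
    · interval_cases m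
      · omega
      · exact absurd ⟨p, a, hp.prime, ha, by omega⟩ h
    · exact hge
  have hpa_lt : p ^ a < r := by
    nlinarith [heq, hpa1, hm2]
  have hmem : p ^ a ∈ Finset.Icc 1 (r - 1) := by
    simp only [Finset.mem_Icc]; omega
  have hdc : Finset.gcd (Finset.Icc 1 (r - 1)) (fun k => r.choose k) ∣ r.choose (p ^ a) := by
    simpa using Finset.gcd_dvd (f := fun k => r.choose k) hmem
  exact aux_lucas p hp a m hpm (by rw [heq]; exact hpd.trans hdc)
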